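/- If T : C(X) → C(X) is fully order preserving and one writes T(h_{u,α}) = h_{y(u,α), γ(u,α)} for the images of affine functions, then y(u,α) does not depend on α: y(u,α) = y(u,δ) for all α, δ ∈ ℝ. -/
import Mathlib


open Set

noncomputable section

variable {X : Type*}

/-- The class of proper, lower semicontinuous, convex functions `X → ℝ ∪ {+∞}`,
encoded as `EReal`-valued functions never taking the value `⊥`. -/
def IsClFun (X : Type*) [NormedAddCommGroup X] [NormedSpace ℝ X] (f : X → EReal) : Prop :=
  (∀ x, f x ≠ ⊥) ∧ (∃ x, f x ≠ ⊤) ∧ LowerSemicontinuous f ∧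
  ∀ x y : X, ∀ a b : ℝ, 0 ≤ a → 0 ≤ b → a + b = 1 →
    f (a • x + b • y) ≤ (a : EReal) * f x + (b : EReal) * f y

/-- `C(X)`, as a subtype. -/
abbrev Cl (X : Type*) [NormedAddCommGroup X] [NormedSpace ℝ X] :=
  {f : X → EReal // IsClFun X f}

/-- The continuous affine function `h_{u,α}(x) = ⟨u,x⟩ + α`. -/
def aff [NormedAddCommGroup X] [NormedSpace ℝ X] (u : X →L[ℝ] ℝ) (α : ℝ) : X → EReal :=
  fun x => ((u x + α : ℝ) : EReal)

theorem affMem [NormedAddCommGroup X] [NormedSpace ℝ X] (u : X →L[ℝ] ℝ) (α : ℝ) :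
    IsClFun X (aff u α) := by
  refine ⟨fun x => EReal.coe_ne_bot _, ⟨0, EReal.coe_ne_top _⟩, ?_, ?_⟩
  · exact (continuous_coe_real_ereal.comp (by continuity)).lowerSemicontinuous
  · intro x y a b ha hb hab
    simp only [aff, map_add, map_smul, smul_eq_mul]
    rw [← EReal.coe_mul, ← EReal.coe_mul, ← EReal.coe_add, EReal.coe_le_coe_iff]
    have h : a * α + b * α = α := by rw [← add_mul, hab, one_mul]
    nlinarith

/-- `h_{u,α}` as an element of `C(X)`. -/
def affCl [NormedAddCommGroup X] [NormedSpace ℝ X] (u : X →L[ℝ] ℝ) (α : ℝ) : Cl X :=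
  ⟨aff u α, affMem u α⟩

/-- An operator on `C(X)` is fully order preserving if it is onto and
`f ≤ g ↔ T f ≤ T g` (pointwise order). -/
def FullyOrderPreserving [NormedAddCommGroup X] [NormedSpace ℝ X]
    (T : Cl X → Cl X) : Prop :=
  Function.Surjective T ∧ ∀ f g : Cl X, f.1 ≤ g.1 ↔ (T f).1 ≤ (T g).1

theorem linear_part_independent_of_constant
    [NormedAddCommGroup X] [NormedSpace ℝ X] [CompleteSpace X]
    (T : Cl X → Cl X) (hT : FullyOrderPreserving T)
    (y : (X →L[ℝ] ℝ) → ℝ → (X →L[ℝ] ℝ)) (γ : (X →L[ℝ] ℝ) → ℝ → ℝ)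
    (hrep : ∀ (u : X →L[ℝ] ℝ) (α : ℝ), (T (affCl u α)).1 = aff (y u α) (γ u α)) :
    ∀ (u : X →L[ℝ] ℝ) (α δ : ℝ), y u α = y u δ := by
  have key : ∀ (u : X →L[ℝ] ℝ) (α δ : ℝ), α ≤ δ → y u α = y u δ := by
    intro u α δ h
    have hle : (affCl u α).1 ≤ (affCl u δ).1 := by
      intro x
      simp only [affCl, aff]
      exact EReal.coe_le_coe_iff.mpr (by linarith)
    have h2 := (hT.2 _ _).mp hle
    rw [hrep, hrep] at h2
    have hreal : ∀ x : X, (y u α) x + γ u α ≤ (y u δ) x + γ u δ := by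
      intro x
      exact EReal.coe_le_coe_iff.mp (h2 x)
    ext x
    by_contra hne
    set c : ℝ := (y u α) x - (y u δ) x with hc
    have hcne : c ≠ 0 := sub_ne_zero.mpr hne
    set M : ℝ := γ u δ - γ u α with hM
    have hb : ∀ t : ℝ, t * c ≤ M := by
      intro t
      have := hreal (t • x)
      simp only [map_smul, smul_eq_mul] at this
      rw [hc, hM]; ring_nf; linarith
    have := hb ((M + 1) / c)
    rw [div_mul_cancel₀ _ hcne] at this
    linarith
  intro u α δ
  rcases le_total α δ with h | h
  · exact key u α δ h
  · exact (key u δ α h).symm
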